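/- Let Φ be an OQW on k sites with degree of freedom n whose hitting probability series converge. Then for all sites i ≠ j and every positive semidefinite ρ ∈ M_n(ℂ): h_{ji}(ρ) = ∑_{l=1}^k h_{jl}((B l i) ρ (B l i)ᴴ), where by convention h_{jj}(σ) := Tr σ. -/
import Mathlib


open Matrix
open scoped ComplexOrder

noncomputable section

abbrev Mn (n : ℕ) : Type := Matrix (Fin n) (Fin n) ℂ

/-- An open quantum random walk on `k` sites with degree of freedom `n`:
`∑ i, (B i j)ᴴ (B i j) = 1` for every `j`. -/
def IsOQW {n k : ℕ} (B : Fin k → Fin k → Mn n) : Prop :=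
  ∀ j : Fin k, ∑ i : Fin k, (B i j)ᴴ * B i j = 1

/-- The product `B (x r) (x (r-1)) * ⋯ * B (x 1) (x 0)` along a path `x`. -/
def pathProd {n k : ℕ} (B : Fin k → Fin k → Mn n) : (r : ℕ) → (Fin (r+1) → Fin k) → Mn n
  | 0, _ => 1
  | r+1, x => B (x (Fin.last (r+1))) (x (Fin.last r).castSucc) *
      pathProd B r (fun s => x s.castSucc)

/-- The index set of `π(j ← i; r)`: paths `x_0 = i, x_1, …, x_r = j` with `x_s ≠ j`
for `1 ≤ s ≤ r - 1`. -/
def pathsSet (k : ℕ) (j i : Fin k) (r : ℕ) : Finset (Fin (r+1) → Fin k) :=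
  Finset.univ.filter fun x => x 0 = i ∧ x (Fin.last r) = j ∧
    ∀ s : Fin (r+1), s ≠ 0 → s ≠ Fin.last r → x s ≠ j

/-- The hitting probability `h_{ji}(σ)`: `∑_{r ≥ 1} ∑_{C ∈ π(j←i;r)} Tr(C σ Cᴴ)`
for `j ≠ i`, with the convention `h_{jj}(σ) = Tr σ`. -/
def hitProb {n k : ℕ} (B : Fin k → Fin k → Mn n) (j i : Fin k) (σ : Mn n) : ℂ :=
  if j = i then σ.trace
  else ∑' r : ℕ, ∑ x ∈ pathsSet k j i (r+1),
    (pathProd B (r+1) x * σ * (pathProd B (r+1) x)ᴴ).trace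

lemma mem_pathsSet {k : ℕ} {j i : Fin k} {r : ℕ} {x : Fin (r+1) → Fin k} :
    x ∈ pathsSet k j i r ↔ x 0 = i ∧ x (Fin.last r) = j ∧
      ∀ s : Fin (r+1), s ≠ 0 → s ≠ Fin.last r → x s ≠ j := by
  simp [pathsSet]

lemma pathProd_succ_left {n k : ℕ} (B : Fin k → Fin k → Mn n) :
    ∀ (r : ℕ) (x : Fin (r+2) → Fin k),
    pathProd B (r+1) x = pathProd B r (fun s => x s.succ) * B (x 1) (x 0) := by
  intro r
  induction r with
  | zero =>
    intro x
    show B (x (Fin.last 1)) (x ((Fin.last 0).castSucc)) * pathProd B 0 _ = _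
    show _ = (1 : Mn n) * B (x 1) (x 0)
    rw [one_mul]
    show B (x (Fin.last 1)) (x ((Fin.last 0).castSucc)) * (1 : Mn n) = _
    rw [mul_one]
    rfl
  | succ r ih =>
    intro x
    show B (x (Fin.last (r+2))) (x (Fin.last (r+1)).castSucc) *
        pathProd B (r+1) (fun s => x s.castSucc) = _
    rw [ih (fun s => x s.castSucc)]
    show B (x (Fin.last (r+2))) (x (Fin.last (r+1)).castSucc) *
        (pathProd B r (fun s => x (s.succ.castSucc)) *
          B (x ((1 : Fin (r+2)).castSucc)) (x ((0 : Fin (r+2)).castSucc))) = _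
    have h1 : ((1 : Fin (r+2)).castSucc : Fin (r+3)) = 1 := rfl
    have h0 : ((0 : Fin (r+2)).castSucc : Fin (r+3)) = 0 := rfl
    rw [h1, h0]
    have hexp : pathProd B (r+1) (fun s => x s.succ)
        = B (x (Fin.last (r+1)).succ) (x ((Fin.last r).castSucc).succ) *
          pathProd B r (fun s => x (s.castSucc.succ)) := rfl
    rw [hexp]
    simp only [Fin.succ_last, Fin.succ_castSucc]
    rw [← mul_assoc]

lemma val_one_lt {m : ℕ} : ((1 : Fin (m+3)) : ℕ) = 1 := by
  simp

lemma one_ne_last {m : ℕ} : (1 : Fin (m+3)) ≠ Fin.last (m+2) := by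
  simp [Fin.ext_iff]

/-- The key combinatorial step: decompose paths of length `r+2` according to
their first step. -/
lemma sum_paths_split {n k : ℕ} (B : Fin k → Fin k → Mn n) (j i : Fin k) (r : ℕ) (ρ : Mn n) :
    ∑ x ∈ pathsSet k j i (r+2),
      (pathProd B (r+2) x * ρ * (pathProd B (r+2) x)ᴴ).trace
    = ∑ l ∈ Finset.univ.erase j, ∑ y ∈ pathsSet k j l (r+1),
      (pathProd B (r+1) y * (B l i * ρ * (B l i)ᴴ) * (pathProd B (r+1) y)ᴴ).trace := by
  rw [Finset.sum_sigma']
  refine Finset.sum_nbij' (i := fun x => ⟨x 1, fun s => x s.succ⟩)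
    (j := fun p => Fin.cases i p.2) ?_ ?_ ?_ ?_ ?_
  · intro x hx
    rw [mem_pathsSet] at hx
    obtain ⟨h0, hl, hint⟩ := hx
    rw [Finset.mem_sigma]
    constructor
    · rw [Finset.mem_erase]
      refine ⟨hint 1 (by simp [Fin.ext_iff]) one_ne_last, Finset.mem_univ _⟩
    · rw [mem_pathsSet]
      refine ⟨rfl, ?_, ?_⟩
      · show x (Fin.last (r+1)).succ = j
        rw [Fin.succ_last]
        exact hl
      · intro s hs0 hslast
        apply hint s.succ (Fin.succ_ne_zero s)
        intro h
        apply hslast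
        rw [← Fin.succ_last] at h
        exact Fin.succ_injective _ h
  · rintro ⟨l, y⟩ hp
    rw [Finset.mem_sigma, Finset.mem_erase, mem_pathsSet] at hp
    obtain ⟨⟨hlj, -⟩, h0, hl, hint⟩ := hp
    rw [mem_pathsSet]
    refine ⟨by simp, ?_, ?_⟩
    · show (Fin.cases i y : Fin (r+3) → Fin k) (Fin.last (r+2)) = j
      rw [← Fin.succ_last]
      simp only [Fin.cases_succ]
      exact hl
    · intro s hs0 hslast
      induction s using Fin.cases with
      | zero => exact absurd rfl hs0
      | succ t =>
        simp only [Fin.cases_succ]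
        by_cases ht0 : t = 0
        · subst ht0
          exact fun hc => hlj (h0.symm.trans hc)
        · by_cases htl : t = Fin.last (r+1)
          · exfalso; apply hslast; rw [htl, Fin.succ_last]
          · exact hint t ht0 htl
  · intro x hx
    rw [mem_pathsSet] at hx
    funext s
    induction s using Fin.cases with
    | zero => simp only [Fin.cases_zero]; exact hx.1.symm
    | succ t => simp only [Fin.cases_succ]
  · rintro ⟨l, y⟩ hp
    rw [Finset.mem_sigma, mem_pathsSet] at hp
    have h1 : (Fin.cases i y : Fin (r+3) → Fin k) 1 = l := by
      have : ((0 : Fin (r+2)).succ : Fin (r+3)) = 1 := by simp [Fin.ext_iff]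
      rw [← this]
      simp only [Fin.cases_succ]
      exact hp.2.1
    refine Sigma.ext h1 (heq_of_eq ?_)
    funext s
    simp only [Fin.cases_succ]
  · intro x hx
    rw [mem_pathsSet] at hx
    show (pathProd B (r+2) x * ρ * (pathProd B (r+2) x)ᴴ).trace = _
    rw [pathProd_succ_left B (r+1) x, hx.1]
    simp only [conjTranspose_mul, mul_assoc]

lemma pathsSet_one {k : ℕ} (j i : Fin k) :
    pathsSet k j i 1 = {![i, j]} := by
  ext x
  rw [mem_pathsSet, Finset.mem_singleton]
  constructor
  · rintro ⟨h0, h1, -⟩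
    funext s
    fin_cases s
    · exact h0
    · exact h1
  · rintro rfl
    refine ⟨rfl, rfl, ?_⟩
    intro s hs0 hs1
    exfalso
    fin_cases s
    · exact hs0 rfl
    · exact hs1 rfl

lemma pathProd_one {n k : ℕ} (B : Fin k → Fin k → Mn n) (j i : Fin k) :
    pathProd B 1 ![i, j] = B j i := by
  show B (![i, j] (Fin.last 1)) (![i, j] ((Fin.last 0).castSucc)) * (1 : Mn n) = B j i
  rw [mul_one]
  rfl

/-- First-step identity for hitting probabilities of OQWs:
`h_{ji}(ρ) = ∑_l h_{jl}((B l i) ρ (B l i)ᴴ)` for all sites `i ≠ j` and all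
positive semidefinite `ρ`, provided the hitting probability series converge. -/
theorem hitProb_first_step {n k : ℕ} (B : Fin k → Fin k → Mn n) (hB : IsOQW B)
    (hconv : ∀ (j i : Fin k) (σ : Mn n), σ.PosSemidef →
      Summable fun r : ℕ => ∑ x ∈ pathsSet k j i (r+1),
        (pathProd B (r+1) x * σ * (pathProd B (r+1) x)ᴴ).trace) :
    ∀ i j : Fin k, i ≠ j → ∀ ρ : Mn n, ρ.PosSemidef →
      hitProb B j i ρ = ∑ l : Fin k, hitProb B j l (B l i * ρ * (B l i)ᴴ) := by
  intro i j hij ρ hρ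
  have hσ : ∀ l : Fin k, (B l i * ρ * (B l i)ᴴ).PosSemidef := fun l =>
    hρ.mul_mul_conjTranspose_same (B l i)
  -- RHS: split off the `l = j` term
  have hjj : hitProb B j j (B j i * ρ * (B j i)ᴴ) = (B j i * ρ * (B j i)ᴴ).trace := by
    simp [hitProb]
  rw [← Finset.add_sum_erase _ _ (Finset.mem_univ j), hjj]
  have hR : ∀ l ∈ Finset.univ.erase j,
      hitProb B j l (B l i * ρ * (B l i)ᴴ)
        = ∑' r : ℕ, ∑ y ∈ pathsSet k j l (r+1),
            (pathProd B (r+1) y * (B l i * ρ * (B l i)ᴴ) *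
              (pathProd B (r+1) y)ᴴ).trace := by
    intro l hl
    rw [Finset.mem_erase] at hl
    rw [hitProb, if_neg (Ne.symm hl.1)]
  rw [Finset.sum_congr rfl hR]
  -- LHS: split off the `r = 0` term
  rw [hitProb, if_neg (Ne.symm hij)]
  rw [Summable.tsum_eq_zero_add (hconv j i ρ hρ)]
  congr 1
  · -- the length-one paths
    rw [pathsSet_one, Finset.sum_singleton, pathProd_one]
  · -- longer paths, via the combinatorial decomposition
    rw [← Summable.tsum_finsetSum (fun l hl => hconv j l _ (hσ l))]
    apply tsum_congr
    intro r
    exact sum_paths_split B j i r ρ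

end
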